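/- Let R be a ring, A a right ideal of R with a serial factorization A = A_1⋯A_n, and B a right ideal of R containing A. Then B has a serial factorization if and only if either B ⊇ A_i for some index i = 1, …, n or B is a two-sided ideal of R. -/

import Mathlib

open MulOpposite

universe u

/-- The product `A·B` of two right ideals of `R` (right ideals are `Rᵐᵒᵖ`-submodules of `R`):
the set of all finite sums of products `a * b` with `a ∈ A`, `b ∈ B`. -/
def rmul {R : Type u} [Ring R] (A B : Submodule Rᵐᵒᵖ R) : Submodule Rᵐᵒᵖ R :=
  Submodule.span Rᵐᵒᵖ {x : R | ∃ a ∈ A, ∃ b ∈ B, x = a * b}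

/-- The product `A₁⋯Aₙ` of a (possibly empty) list of right ideals. -/
def rprod {R : Type u} [Ring R] : List (Submodule Rᵐᵒᵖ R) → Submodule Rᵐᵒᵖ R
  | [] => ⊤
  | [A] => A
  | A :: l => rmul A (rprod l)

/-- A finite family of right ideals is coindependent if `Aᵢ + ⋂_{j ≠ i} Aⱼ = R` for every `i`. -/
def Coindep {R : Type u} [Ring R] {n : ℕ} (A : Fin n → Submodule Rᵐᵒᵖ R) : Prop :=
  ∀ i, A i ⊔ (⨅ j, ⨅ (_ : j ≠ i), A j) = ⊤

/-- A module is uniserial if its submodules are linearly ordered by inclusion. -/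
def IsUniserialMod (S : Type*) [Ring S] (M : Type*) [AddCommGroup M] [Module S M] : Prop :=
  ∀ N P : Submodule S M, N ≤ P ∨ P ≤ N

/-- A right ideal is a two-sided ideal if it is also closed under left multiplication. -/
def IsTwoSidedRid {R : Type u} [Ring R] (A : Submodule Rᵐᵒᵖ R) : Prop :=
  ∀ (r : R), ∀ x ∈ A, r * x ∈ A

/-- A serial factorization of a right ideal `A`: a factorization `A = A₁⋯Aₙ` into proper
right ideals that pairwise commute, form a coindependent family, and are such that every
quotient `R/Aᵢ` is a uniserial right `R`-module. -/
def IsSerialFact {R : Type u} [Ring R] {n : ℕ} (A : Submodule Rᵐᵒᵖ R)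
    (F : Fin n → Submodule Rᵐᵒᵖ R) : Prop :=
  (∀ i, F i ≠ ⊤) ∧ (∀ i j, rmul (F i) (F j) = rmul (F j) (F i)) ∧ Coindep F ∧
    (∀ i, IsUniserialMod Rᵐᵒᵖ (R ⧸ F i)) ∧ A = rprod (List.ofFn F)

/-- A right ideal has a serial factorization if it admits one of some length. -/
def HasSerialFact {R : Type u} [Ring R] (A : Submodule Rᵐᵒᵖ R) : Prop :=
  ∃ (n : ℕ) (F : Fin n → Submodule Rᵐᵒᵖ R), IsSerialFact A F

/-- A right chain ring: its right ideals are linearly ordered by inclusion. -/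
def IsRightChainRing (R : Type u) [Ring R] : Prop :=
  ∀ A B : Submodule Rᵐᵒᵖ R, A ≤ B ∨ B ≤ A

/-- A ring is right duo if every right ideal is a two-sided ideal. -/
def IsRightDuo (R : Type u) [Ring R] : Prop :=
  ∀ A : Submodule Rᵐᵒᵖ R, IsTwoSidedRid A

/-- The principal right ideal `rR`. -/
def rspan {R : Type u} [Ring R] (r : R) : Submodule Rᵐᵒᵖ R :=
  Submodule.span Rᵐᵒᵖ ({r} : Set R)
namespace SFAux

variable {R : Type u} [Ring R]

lemma mem_right {A : Submodule Rᵐᵒᵖ R} {a : R} (ha : a ∈ A) (r : R) : a * r ∈ A := by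
  simpa [MulOpposite.smul_eq_mul_unop] using A.smul_mem (op r) ha

lemma mem_rmul {A B : Submodule Rᵐᵒᵖ R} {a b : R} (ha : a ∈ A) (hb : b ∈ B) :
    a * b ∈ rmul A B :=
  Submodule.subset_span ⟨a, ha, b, hb, rfl⟩

lemma rmul_le_iff {A B C : Submodule Rᵐᵒᵖ R} :
    rmul A B ≤ C ↔ ∀ a ∈ A, ∀ b ∈ B, a * b ∈ C := by
  constructor
  · intro h a ha b hb; exact h (mem_rmul ha hb)
  · intro h
    apply Submodule.span_le.2
    rintro x ⟨a, ha, b, hb, rfl⟩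
    exact h a ha b hb

lemma rmul_induction {A B : Submodule Rᵐᵒᵖ R} {x : R} (hx : x ∈ rmul A B)
    {p : R → Prop} (h0 : p 0)
    (hmem : ∀ a ∈ A, ∀ b ∈ B, p (a * b))
    (hadd : ∀ x y, p x → p y → p (x + y)) : p x := by
  have key : ∀ t : R, p (x * t) := by
    refine Submodule.span_induction (p := fun x _ => ∀ t : R, p (x * t)) ?_ ?_ ?_ ?_ hx
    · rintro x ⟨a, ha, b, hb, rfl⟩ t
      rw [mul_assoc]
      exact hmem a ha _ (mem_right hb t)
    · intro t; simpa using h0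
    · intro x y _ _ hx hy t
      rw [add_mul]; exact hadd _ _ (hx t) (hy t)
    · intro c x _ hx t
      rw [MulOpposite.smul_eq_mul_unop, mul_assoc]
      exact hx _
  simpa using key 1

lemma rmul_le_left {A B : Submodule Rᵐᵒᵖ R} : rmul A B ≤ A :=
  rmul_le_iff.2 fun a ha b _ => mem_right ha b

lemma rmul_mono {A A' B B' : Submodule Rᵐᵒᵖ R} (h1 : A ≤ A') (h2 : B ≤ B') :
    rmul A B ≤ rmul A' B' :=
  rmul_le_iff.2 fun a ha b hb => mem_rmul (h1 ha) (h2 hb)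

lemma le_rmul_top {A : Submodule Rᵐᵒᵖ R} : A ≤ rmul (⊤ : Submodule Rᵐᵒᵖ R) A := by
  intro x hx
  have := mem_rmul (show (1:R) ∈ (⊤ : Submodule Rᵐᵒᵖ R) from trivial) hx
  rwa [one_mul] at this

lemma rmul_top (A : Submodule Rᵐᵒᵖ R) : rmul A ⊤ = A := by
  refine le_antisymm rmul_le_left ?_
  intro x hx
  have := mem_rmul hx (show (1:R) ∈ (⊤ : Submodule Rᵐᵒᵖ R) from trivial)
  rwa [mul_one] at this

lemma rmul_assoc (A B C : Submodule Rᵐᵒᵖ R) : rmul (rmul A B) C = rmul A (rmul B C) := by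
  apply le_antisymm
  · refine rmul_le_iff.2 fun x hx c hc => ?_
    refine rmul_induction (p := fun y => y * c ∈ rmul A (rmul B C)) hx (by simp) (fun a ha b hb => ?_) (fun u v hu hv => ?_)
    · show a * b * c ∈ _
      rw [mul_assoc]; exact mem_rmul ha (mem_rmul hb hc)
    · show (u + v) * c ∈ _
      rw [add_mul]; exact Submodule.add_mem _ hu hv
  · refine rmul_le_iff.2 fun a ha z hz => ?_
    refine rmul_induction (p := fun y => a * y ∈ rmul (rmul A B) C) hz (by simp) (fun b hb c hc => ?_) (fun u v hu hv => ?_)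
    · show a * (b * c) ∈ _
      rw [← mul_assoc]; exact mem_rmul (mem_rmul ha hb) hc
    · show a * (u + v) ∈ _
      rw [mul_add]; exact Submodule.add_mem _ hu hv

lemma rprod_nil : rprod ([] : List (Submodule Rᵐᵒᵖ R)) = ⊤ := rfl

lemma rprod_singleton (A : Submodule Rᵐᵒᵖ R) : rprod [A] = A := rfl

lemma rprod_cons (A : Submodule Rᵐᵒᵖ R) (l : List (Submodule Rᵐᵒᵖ R)) :
    rprod (A :: l) = rmul A (rprod l) := by
  cases l with
  | nil => rw [rprod_singleton, rprod_nil, rmul_top]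
  | cons B l => rfl

lemma rmul_rprod_comm {A : Submodule Rᵐᵒᵖ R} :
    ∀ (l : List (Submodule Rᵐᵒᵖ R)), l ≠ [] → (∀ C ∈ l, rmul A C = rmul C A) →
      rmul A (rprod l) = rmul (rprod l) A := by
  intro l
  induction l with
  | nil => intro h; exact absurd rfl h
  | cons B l ih =>
    intro _ hc
    cases l with
    | nil => rw [rprod_singleton]; exact hc B (by simp)
    | cons C l' =>
      have hBl : B :: C :: l' ≠ [] := by simp
      rw [rprod_cons, ← rmul_assoc, hc B (by simp), rmul_assoc,
        ih (by simp) (fun D hD => hc D (by simp [hD])), ← rmul_assoc, ← rprod_cons]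

lemma rprod_le_mem :
    ∀ (l : List (Submodule Rᵐᵒᵖ R)), (∀ X ∈ l, ∀ Y ∈ l, rmul X Y = rmul Y X) →
      ∀ A ∈ l, rprod l ≤ A := by
  intro l
  induction l with
  | nil => intro _ A hA; exact absurd hA (by simp)
  | cons B l ih =>
    intro hc A hA
    rcases List.mem_cons.1 hA with rfl | hA
    · rw [rprod_cons]; exact rmul_le_left
    · have hl : l ≠ [] := by rintro rfl; simp at hA
      have : rprod (B :: l) = rmul (rprod l) B := by
        rw [rprod_cons]
        exact rmul_rprod_comm l hl (fun C hC => hc B (by simp) C (by simp [hC]))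
      rw [this]
      exact rmul_le_left.trans (ih (fun X hX Y hY => hc X (by simp [hX]) Y (by simp [hY])) A hA)

end SFAux
namespace SFAux

variable {R : Type u} [Ring R]

lemma coindep_pair {N : ℕ} {H : Fin N → Submodule Rᵐᵒᵖ R} (hco : Coindep H)
    {i j : Fin N} (hij : j ≠ i) : H i ⊔ H j = ⊤ := by
  have h := hco i
  refine eq_top_iff.2 ?_
  rw [← h]
  refine sup_le_sup_left ?_ _
  exact le_trans (iInf_le _ j) (iInf_le _ hij)

lemma mem_iInf_ne {N : ℕ} {H : Fin N → Submodule Rᵐᵒᵖ R} {i : Fin N} {x : R} :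
    x ∈ (⨅ j, ⨅ (_ : j ≠ i), H j) ↔ ∀ j, j ≠ i → x ∈ H j := by
  simp [Submodule.mem_iInf]

lemma mem_iInf_list {N : ℕ} {H : Fin N → Submodule Rᵐᵒᵖ R} {t : List (Fin N)} {x : R} :
    x ∈ (⨅ i ∈ t, H i) ↔ ∀ i ∈ t, x ∈ H i := by
  simp [Submodule.mem_iInf]

/-- CRT-type inclusion: the intersection of a coindependent commuting subfamily is contained
in its product. -/
lemma iInf_le_rprod {N : ℕ} (H : Fin N → Submodule Rᵐᵒᵖ R)
    (hcomm : ∀ i j, rmul (H i) (H j) = rmul (H j) (H i)) (hco : Coindep H) :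
    ∀ t : List (Fin N), t.Nodup → (⨅ i ∈ t, H i) ≤ rprod (t.map H) := by
  intro t
  induction t with
  | nil => intro _; exact le_top
  | cons a t' ih =>
    intro hnd
    have ha : a ∉ t' := (List.nodup_cons.1 hnd).1
    have hnd' : t'.Nodup := (List.nodup_cons.1 hnd).2
    cases t' with
    | nil =>
      intro x hx
      have : x ∈ H a := (mem_iInf_list.1 hx) a (by simp)
      simpa [rprod_singleton] using this
    | cons b t'' =>
      have hsupa : H a ⊔ (⨅ i ∈ (b :: t''), H i) = ⊤ := by
        refine eq_top_iff.2 ?_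
        rw [← hco a]
        refine sup_le_sup_left ?_ _
        refine le_iInf fun i => le_iInf fun hi => ?_
        have : i ≠ a := by rintro rfl; exact ha hi
        exact le_trans (iInf_le _ i) (iInf_le _ this)
      obtain ⟨f, hf, y, hy, hfy⟩ := Submodule.mem_sup.1 (hsupa ▸ Submodule.mem_top (x := (1:R)))
      intro x hx
      have hxa : x ∈ H a := (mem_iInf_list.1 hx) a (by simp)
      have hxt : x ∈ (⨅ i ∈ (b :: t''), H i) := by
        refine mem_iInf_list.2 fun i hi => (mem_iInf_list.1 hx) i (by simp [hi])
      have hx' : x ∈ rprod ((b :: t'').map H) := ih hnd' hxt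
      have hy' : y ∈ rprod ((b :: t'').map H) := ih hnd' hy
      rw [List.map_cons, rprod_cons]
      have hxdecomp : x = f * x + y * x := by
        rw [← add_mul, hfy, one_mul]
      rw [hxdecomp]
      refine Submodule.add_mem _ (mem_rmul hf hx') ?_
      have hcomm' : rmul (H a) (rprod ((b :: t'').map H)) = rmul (rprod ((b :: t'').map H)) (H a) := by
        refine rmul_rprod_comm _ (by simp) ?_
        intro C hC
        obtain ⟨i, _, rfl⟩ := List.mem_map.1 hC
        exact hcomm a i
      rw [hcomm']
      exact mem_rmul hy' hxa

/-- Comparability of right ideals containing `X`, when `R/X` is uniserial. -/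
lemma chain_of_uniserial {X : Submodule Rᵐᵒᵖ R} (hu : IsUniserialMod Rᵐᵒᵖ (R ⧸ X))
    {P Q : Submodule Rᵐᵒᵖ R} (hP : X ≤ P) (hQ : X ≤ Q) : P ≤ Q ∨ Q ≤ P := by
  have key : ∀ {P' Q' : Submodule Rᵐᵒᵖ R}, X ≤ P' → X ≤ Q' →
      Submodule.map X.mkQ P' ≤ Submodule.map X.mkQ Q' → P' ≤ Q' := by
    intro P' Q' hP' hQ' h
    have h2 := Submodule.comap_mono (f := X.mkQ) h
    rwa [Submodule.comap_map_eq, Submodule.comap_map_eq, Submodule.ker_mkQ,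
      sup_eq_left.2 hP', sup_eq_left.2 hQ'] at h2
  rcases hu (Submodule.map X.mkQ P) (Submodule.map X.mkQ Q) with h | h
  · exact Or.inl (key hP hQ h)
  · exact Or.inr (key hQ hP h)

lemma uniserial_quot_of_le {X B : Submodule Rᵐᵒᵖ R} (hu : IsUniserialMod Rᵐᵒᵖ (R ⧸ X))
    (hXB : X ≤ B) : IsUniserialMod Rᵐᵒᵖ (R ⧸ B) := by
  intro N P
  have hker : ∀ (N' : Submodule Rᵐᵒᵖ (R ⧸ B)), X ≤ Submodule.comap B.mkQ N' := by
    intro N'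
    refine le_trans hXB ?_
    intro x hx
    have : B.mkQ x = 0 := (Submodule.Quotient.mk_eq_zero _).2 hx
    simp [Submodule.mem_comap, this]
  have hmap : ∀ (N' : Submodule Rᵐᵒᵖ (R ⧸ B)),
      Submodule.map B.mkQ (Submodule.comap B.mkQ N') = N' := fun N' =>
    Submodule.map_comap_eq_of_surjective (Submodule.mkQ_surjective B) N'
  rcases chain_of_uniserial hu (hker N) (hker P) with h | h
  · left; rw [← hmap N, ← hmap P]; exact Submodule.map_mono h
  · right; rw [← hmap N, ← hmap P]; exact Submodule.map_mono h

/-- For a two-sided `B`: `(B ⊔ X)(B ⊔ Y) = B ⊔ XY` when `X ⊔ Y = ⊤` and `XY = YX`. -/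
lemma two_factor {B X Y : Submodule Rᵐᵒᵖ R} (hB : IsTwoSidedRid B) (hXY : X ⊔ Y = ⊤)
    (hc : rmul X Y = rmul Y X) : rmul (B ⊔ X) (B ⊔ Y) = B ⊔ rmul X Y := by
  apply le_antisymm
  · refine rmul_le_iff.2 fun u hu v hv => ?_
    obtain ⟨b, hb, x, hx, rfl⟩ := Submodule.mem_sup.1 hu
    obtain ⟨b', hb', y, hy, rfl⟩ := Submodule.mem_sup.1 hv
    have : (b + x) * (b' + y) = b * (b' + y) + (x * b' + x * y) := by
      rw [add_mul, mul_add x b' y]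
    rw [this]
    refine Submodule.add_mem _ (Submodule.mem_sup_left (mem_right hb _)) ?_
    refine Submodule.add_mem _ (Submodule.mem_sup_left (hB x b' hb')) ?_
    exact Submodule.mem_sup_right (mem_rmul hx hy)
  · refine sup_le ?_ (rmul_mono le_sup_right le_sup_right)
    intro b hb
    obtain ⟨x₀, hx₀, y₀, hy₀, hxy1⟩ := Submodule.mem_sup.1 (hXY ▸ Submodule.mem_top (x := (1:R)))
    have hdec : b = x₀ * b + y₀ * b := by rw [← add_mul, hxy1, one_mul]
    rw [hdec]
    refine Submodule.add_mem _ (mem_rmul (Submodule.mem_sup_right hx₀) (Submodule.mem_sup_left hb)) ?_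
    set v := y₀ * b with hv
    have hvB : v ∈ B := hB y₀ b hb
    have hvY : v ∈ Y := mem_right hy₀ b
    have hdec2 : v = v * x₀ + v * y₀ := by rw [← mul_add, hxy1, mul_one]
    rw [hdec2]
    refine Submodule.add_mem _ ?_ (mem_rmul (Submodule.mem_sup_left hvB) (Submodule.mem_sup_right hy₀))
    have : v * x₀ ∈ rmul X Y := by rw [hc]; exact mem_rmul hvY hx₀
    exact rmul_mono le_sup_right le_sup_right this

end SFAux
namespace SFAux

variable {R : Type u} [Ring R]

/-- Key lemma: if `R/F` is uniserial, `EF ⊆ F`, `E ∩ F ⊆ G`, `E ⊔ G = ⊤` (witnessed by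
`e + g = 1`) and `F ⊄ G`, then `G` is two-sided. -/
lemma lemmaM {E F G : Submodule Rᵐᵒᵖ R}
    (hEF : ∀ y ∈ E, ∀ f ∈ F, y * f ∈ F)
    (hEFG : E ⊓ F ≤ G)
    (hchain : ∀ X Y : Submodule Rᵐᵒᵖ R, F ≤ X → F ≤ Y → X ≤ Y ∨ Y ≤ X)
    (hFG : ¬ F ≤ G)
    {e g : R} (he : e ∈ E) (hg : g ∈ G) (heg : e + g = 1) :
    IsTwoSidedRid G := by
  have he' : e = 1 - g := eq_sub_of_add_eq heg
  -- (0) : g ∉ (E ⊓ G) ⊔ F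
  have h0 : g ∉ (E ⊓ G) ⊔ F := by
    intro hgm
    obtain ⟨w, hw, f, hf, hwf⟩ := Submodule.mem_sup.1 hgm
    have hfG : f ∈ G := by
      have : f = g - w := eq_sub_of_add_eq' hwf
      rw [this]; exact sub_mem hg hw.2
    apply hFG
    intro f' hf'
    have h1 : e + w + f = 1 := by rw [add_assoc, hwf, heg]
    have hdec : f' = e * f' + w * f' + f * f' := by
      calc f' = (e + w + f) * f' := by rw [h1, one_mul]
        _ = e * f' + w * f' + f * f' := by rw [add_mul, add_mul]
    rw [hdec]
    refine add_mem (add_mem ?_ ?_) ?_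
    · exact hEFG ⟨mem_right he f', hEF e he f' hf'⟩
    · exact mem_right hw.2 f'
    · exact mem_right hfG f'
  -- (1) : ∀ y ∈ E, y * g ∈ G
  have key1 : ∀ y ∈ E, y * g ∈ G := by
    intro y hy
    have hygE : y * g ∈ E := mem_right hy g
    rcases hchain (F ⊔ Submodule.span Rᵐᵒᵖ {y * g}) (F ⊔ Submodule.span Rᵐᵒᵖ {g})
        le_sup_left le_sup_left with hcase | hcase
    · -- Case A : y*g ∈ F ⊔ span{g}
      have hmem : y * g ∈ F ⊔ Submodule.span Rᵐᵒᵖ {g} :=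
        hcase (Submodule.mem_sup_right (Submodule.mem_span_singleton_self _))
      obtain ⟨f₁, hf₁, w, hw, hsum⟩ := Submodule.mem_sup.1 hmem
      obtain ⟨t, ht⟩ := Submodule.mem_span_singleton.1 hw
      set t' := unop t with ht'
      have hw' : w = g * t' := by rw [← ht, MulOpposite.smul_eq_mul_unop]
      set z := y * g + e * t' with hz
      have hzE : z ∈ E := add_mem hygE (mem_right he t')
      have hf₁' : f₁ = y * g - g * t' := by
        rw [← hsum, hw']; abel
      have hid : y * g = g * z + e * f₁ := by
        rw [hz, hf₁', he']; noncomm_ring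
      rw [hid]
      refine add_mem (mem_right hg z) ?_
      exact hEFG ⟨mem_right he f₁, hEF e he f₁ hf₁⟩
    · -- Case B : g ∈ F ⊔ span{y*g} — contradiction with (0)
      exfalso
      have hmem : g ∈ F ⊔ Submodule.span Rᵐᵒᵖ {y * g} :=
        hcase (Submodule.mem_sup_right (Submodule.mem_span_singleton_self _))
      obtain ⟨f₂, hf₂, w, hw, hsum⟩ := Submodule.mem_sup.1 hmem
      obtain ⟨s, hs⟩ := Submodule.mem_span_singleton.1 hw
      set s' := unop s with hs'
      have hw' : w = (y * g) * s' := by rw [← hs, MulOpposite.smul_eq_mul_unop]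
      have hf₂' : f₂ = g - (y * g) * s' :=
        eq_sub_of_add_eq (by rw [← hw']; exact hsum)
      have hegG : e * g ∈ E ⊓ G := by
        constructor
        · exact mem_right he g
        · have : e * g = g - g * g := by rw [he']; noncomm_ring
          rw [this]; exact sub_mem hg (mem_right hg g)
      have huEG : g * (y * g) ∈ E ⊓ G := by
        constructor
        · have : g * (y * g) = y * g - e * (y * g) := by rw [he']; noncomm_ring
          rw [this]; exact sub_mem hygE (mem_right he _)
        · exact mem_right hg _
      have hgf₂F : g * f₂ ∈ F := by
        have : g * f₂ = f₂ - e * f₂ := by rw [he']; noncomm_ring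
        rw [this]; exact sub_mem hf₂ (hEF e he f₂ hf₂)
      apply h0
      refine Submodule.mem_sup.2 ⟨e * g + (g * (y * g)) * s', add_mem hegG (mem_right huEG s'),
        g * f₂, hgf₂F, ?_⟩
      rw [hf₂', he']; noncomm_ring
  -- (2) : every x ∈ G decomposes as g*s + f with f ∈ F ⊓ G
  have key2 : ∀ x ∈ G, ∃ s : R, ∃ f ∈ F ⊓ G, x = g * s + f := by
    have hord : F ⊔ (E ⊓ G) ≤ F ⊔ Submodule.span Rᵐᵒᵖ {g} := by
      rcases hchain (F ⊔ (E ⊓ G)) (F ⊔ Submodule.span Rᵐᵒᵖ {g}) le_sup_left le_sup_left with h | h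
      · exact h
      · exfalso
        apply h0
        have : g ∈ F ⊔ (E ⊓ G) := h (Submodule.mem_sup_right (Submodule.mem_span_singleton_self _))
        rwa [sup_comm] at this
    intro x hx
    have hex : e * x ∈ E ⊓ G := by
      constructor
      · exact mem_right he x
      · have : e * x = x - g * x := by rw [he']; noncomm_ring
        rw [this]; exact sub_mem hx (mem_right hg x)
    have hmem : e * x ∈ F ⊔ Submodule.span Rᵐᵒᵖ {g} := hord (Submodule.mem_sup_right hex)
    obtain ⟨f₃, hf₃, w, hw, hsum⟩ := Submodule.mem_sup.1 hmem
    obtain ⟨t, ht⟩ := Submodule.mem_span_singleton.1 hw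
    set t' := unop t with ht'
    have hw' : w = g * t' := by rw [← ht, MulOpposite.smul_eq_mul_unop]
    refine ⟨t' + x, f₃, ⟨hf₃, ?_⟩, ?_⟩
    · have : f₃ = x - g * (t' + x) := by
        have hfe : f₃ = e * x - g * t' := by rw [← hsum, hw']; abel
        rw [hfe, he']; noncomm_ring
      rw [this]
      exact sub_mem hx (mem_right hg _)
    · have hfe : f₃ = e * x - g * t' := by rw [← hsum, hw']; abel
      rw [hfe, he']; noncomm_ring
  -- (3) conclusion
  intro r x hx
  obtain ⟨s, f, hfFG, hxeq⟩ := key2 x hx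
  have hy : e * r ∈ E := mem_right he r
  have hyx : (e * r) * x ∈ G := by
    have : (e * r) * x = ((e * r) * g) * s + (e * r) * f := by
      rw [hxeq]; noncomm_ring
    rw [this]
    refine add_mem (mem_right (key1 _ hy) s) ?_
    exact hEFG ⟨mem_right hy f, hEF _ hy f hfFG.1⟩
  have : r * x = (e * r) * x + g * (r * x) := by
    have h1 : (1 : R) * (r * x) = r * x := one_mul _
    calc r * x = (e + g) * (r * x) := by rw [heg, one_mul]
      _ = (e * r) * x + g * (r * x) := by rw [add_mul, mul_assoc]
  rw [this]
  exact add_mem hyx (mem_right hg _)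

end SFAux
namespace SFAux

variable {R : Type u} [Ring R]

lemma mem_iInf_finset {N : ℕ} {H : Fin N → Submodule Rᵐᵒᵖ R} {S : Finset (Fin N)} {x : R} :
    x ∈ (⨅ i ∈ S, H i) ↔ ∀ i ∈ S, x ∈ H i := by
  simp [Submodule.mem_iInf]

/-- Join of the "complements" `⋂_{k ∈ S, k ≠ i} H k` over `i ∈ S` is everything. -/
lemma sup_compl_eq_top {N : ℕ} (H : Fin N → Submodule Rᵐᵒᵖ R) (hco : Coindep H) :
    ∀ {S : Finset (Fin N)}, S.Nonempty → (⨆ i ∈ S, ⨅ k ∈ S.erase i, H k) = ⊤ := by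
  intro S hS
  induction hS using Finset.Nonempty.cons_induction with
  | singleton a => simp
  | cons a s h hs IH =>
    refine eq_top_iff.2 ?_
    rw [← IH]
    refine iSup₂_le fun i hi => ?_
    have hia : i ≠ a := by rintro rfl; exact h hi
    set X := ⨆ j ∈ Finset.cons a s h, ⨅ k ∈ (Finset.cons a s h).erase j, H k with hX
    set Di := ⨅ k ∈ s.erase i, H k with hDi
    set Y := ⨅ k ∈ s, H k with hY
    have hYD : Y ≤ Di := le_iInf₂ fun k hk => iInf₂_le k (Finset.mem_of_mem_erase hk)
    have htop : H a ⊔ Y = ⊤ := by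
      refine eq_top_iff.2 ?_
      rw [← hco a]
      refine sup_le_sup_left ?_ _
      refine le_iInf₂ fun k hk => ?_
      have hka : k ≠ a := by rintro rfl; exact h hk
      exact le_trans (iInf_le _ k) (iInf_le _ hka)
    have hmod : Di = Y ⊔ (H a ⊓ Di) := by
      calc Di = ⊤ ⊓ Di := (top_inf_eq _).symm
        _ = (Y ⊔ H a) ⊓ Di := by rw [← htop, sup_comm]
        _ = Y ⊔ (H a ⊓ Di) := sup_inf_assoc_of_le _ hYD
    rw [hmod]
    refine sup_le ?_ ?_
    · have hYeq : Y = ⨅ k ∈ (Finset.cons a s h).erase a, H k := by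
        rw [Finset.erase_cons]
      rw [hYeq]
      exact le_iSup₂ (f := fun j _ => ⨅ k ∈ (Finset.cons a s h).erase j, H k) a
        (Finset.mem_cons_self a s)
    · have heq : (Finset.cons a s h).erase i = insert a (s.erase i) := by
        rw [Finset.cons_eq_insert, Finset.erase_insert_of_ne hia.symm]
      have : H a ⊓ Di = ⨅ k ∈ (Finset.cons a s h).erase i, H k := by
        rw [heq, Finset.iInf_insert]
      rw [this]
      exact le_iSup₂ (f := fun j _ => ⨅ k ∈ (Finset.cons a s h).erase j, H k) i
        (Finset.mem_cons.2 (Or.inr hi))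

lemma exists_max : ∀ {N : ℕ} (f : Fin (N + 1) → Submodule Rᵐᵒᵖ R),
    (∀ a b, f a ≤ f b ∨ f b ≤ f a) → ∃ a₀, ∀ a, f a ≤ f a₀ := by
  intro N
  induction N with
  | zero =>
    intro f _
    refine ⟨0, fun a => ?_⟩
    have : a = 0 := Fin.ext (by omega)
    rw [this]
  | succ N ih =>
    intro f hf
    obtain ⟨b₀, hb₀⟩ := ih (fun i => f i.succ) (fun a b => hf _ _)
    rcases hf 0 b₀.succ with h | h
    · exact ⟨b₀.succ, fun a => Fin.cases h (fun i => hb₀ i) a⟩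
    · exact ⟨0, fun a => Fin.cases le_rfl (fun i => (hb₀ i).trans h) a⟩

/-- If `B ⊔ F i = ⊤` for all `i` outside `Kc`ᶜ, then the intersection over `Kc`ᶜ lies in `B`. -/
lemma inf_compl_le {N : ℕ} {F : Fin N → Submodule Rᵐᵒᵖ R} {B : Submodule Rᵐᵒᵖ R}
    (hcomm : ∀ i j, rmul (F i) (F j) = rmul (F j) (F i))
    (hA : (⨅ i, F i) ≤ B) :
    ∀ Kc : Finset (Fin N), (∀ i ∈ Kc, B ⊔ F i = ⊤) → (⨅ i ∈ Kcᶜ, F i) ≤ B := by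
  intro Kc
  induction Kc using Finset.induction_on with
  | empty =>
    intro _
    have : (⨅ i ∈ (∅ : Finset (Fin N))ᶜ, F i) = ⨅ i, F i := by simp
    rw [this]; exact hA
  | @insert a s ha ih =>
    intro h
    have htop := h a (Finset.mem_insert_self a s)
    obtain ⟨b, hb, fa, hfa, hsum⟩ :=
      Submodule.mem_sup.1 (htop ▸ Submodule.mem_top (x := (1:R)))
    intro x hx
    have hdec : x = b * x + fa * x := by rw [← add_mul, hsum, one_mul]
    have hfx : fa * x ∈ ⨅ i ∈ sᶜ, F i := by
      refine mem_iInf_finset.2 fun k hk => ?_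
      by_cases hka : k = a
      · subst hka; exact mem_right hfa x
      · have hk' : k ∈ (insert a s)ᶜ := by
          simp only [Finset.mem_compl, Finset.mem_insert] at hk ⊢
          tauto
        have hxk : x ∈ F k := mem_iInf_finset.1 hx k hk'
        have hmem : fa * x ∈ rmul (F a) (F k) := mem_rmul hfa hxk
        rw [hcomm a k] at hmem
        exact rmul_le_left hmem
    have hbx : b * x ∈ B := mem_right hb x
    rw [hdec]
    exact add_mem hbx (ih (fun i hi => h i (Finset.mem_insert_of_mem hi)) hfx)

end SFAux
namespace SFAux

variable {R : Type u} [Ring R]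

lemma rprod_le_rmul_erase {m : ℕ} (G : Fin m → Submodule Rᵐᵒᵖ R)
    (hcomm : ∀ i j, rmul (G i) (G j) = rmul (G j) (G i)) :
    ∀ (t : List (Fin m)) (j : Fin m), j ∈ t →
      rprod (t.map G) ≤ rmul (rprod ((t.erase j).map G)) (G j) := by
  intro t
  induction t with
  | nil => intro j hj; simp at hj
  | cons a t' ih =>
    intro j hj
    by_cases haj : a = j
    · subst haj
      rw [List.erase_cons_head, List.map_cons, rprod_cons]
      cases t' with
      | nil =>
        rw [List.map_nil, rprod_nil, rmul_top]
        exact le_rmul_top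
      | cons b t'' =>
        refine le_of_eq (rmul_rprod_comm _ (by simp) ?_)
        intro C hC
        obtain ⟨i, _, rfl⟩ := List.mem_map.1 hC
        exact hcomm a i
    · have hj' : j ∈ t' := by
        rcases List.mem_cons.1 hj with h | h
        · exact absurd h.symm haj
        · exact h
      have herase : (a :: t').erase j = a :: t'.erase j :=
        List.erase_cons_tail (by simp [haj])
      rw [herase, List.map_cons, rprod_cons, List.map_cons, rprod_cons, rmul_assoc]
      exact rmul_mono le_rfl (ih j hj')

lemma iInf_ne_eq_finset {N : ℕ} (H : Fin N → Submodule Rᵐᵒᵖ R) (i : Fin N) :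
    (⨅ j, ⨅ (_ : j ≠ i), H j) = ⨅ k ∈ Finset.univ.erase i, H k := by
  apply le_antisymm
  · refine le_iInf₂ fun k hk => ?_
    have hk' : k ≠ i := (Finset.mem_erase.1 hk).1
    exact le_trans (iInf_le _ k) (iInf_le _ hk')
  · refine le_iInf fun k => le_iInf fun hk => ?_
    exact iInf₂_le k (Finset.mem_erase.2 ⟨hk, Finset.mem_univ k⟩)

lemma sup_Ei_top {N : ℕ} (hN : 0 < N) (H : Fin N → Submodule Rᵐᵒᵖ R) (hco : Coindep H) :
    (⨆ i, ⨅ j, ⨅ (_ : j ≠ i), H j) = ⊤ := by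
  have huniv : (Finset.univ : Finset (Fin N)).Nonempty := ⟨⟨0, hN⟩, Finset.mem_univ _⟩
  have hkey := sup_compl_eq_top H hco huniv
  rw [← hkey]
  apply le_antisymm
  · refine iSup_le fun i => ?_
    rw [iInf_ne_eq_finset H i]
    exact le_iSup₂ (f := fun i _ => ⨅ k ∈ Finset.univ.erase i, H k) i (Finset.mem_univ i)
  · refine iSup₂_le fun i _ => ?_
    rw [← iInf_ne_eq_finset H i]
    exact le_iSup (fun i => ⨅ j, ⨅ (_ : j ≠ i), H j) i

lemma iInf_finRange {N : ℕ} (H : Fin N → Submodule Rᵐᵒᵖ R) :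
    (⨅ i ∈ (List.finRange N), H i) = ⨅ i, H i := by
  apply le_antisymm
  · refine le_iInf fun i => ?_
    exact le_trans (iInf_le _ i) (iInf_le _ (List.mem_finRange i))
  · exact le_iInf fun i => le_iInf fun _ => iInf_le _ i

lemma iInf_le_rprod_ofFn {N : ℕ} (H : Fin N → Submodule Rᵐᵒᵖ R)
    (hcomm : ∀ i j, rmul (H i) (H j) = rmul (H j) (H i)) (hco : Coindep H) :
    (⨅ i, H i) ≤ rprod (List.ofFn H) := by
  rw [List.ofFn_eq_map, ← iInf_finRange H]
  exact iInf_le_rprod H hcomm hco _ (List.nodup_finRange N)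

lemma rprod_ofFn_le {N : ℕ} (H : Fin N → Submodule Rᵐᵒᵖ R)
    (hcomm : ∀ i j, rmul (H i) (H j) = rmul (H j) (H i)) (i : Fin N) :
    rprod (List.ofFn H) ≤ H i := by
  refine rprod_le_mem _ ?_ (H i) (List.mem_ofFn.2 ⟨i, rfl⟩)
  intro X hX Y hY
  obtain ⟨a, rfl⟩ := List.mem_ofFn.1 hX
  obtain ⟨b, rfl⟩ := List.mem_ofFn.1 hY
  exact hcomm a b

lemma rprod_ofFn_eq_iInf {N : ℕ} (H : Fin N → Submodule Rᵐᵒᵖ R)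
    (hcomm : ∀ i j, rmul (H i) (H j) = rmul (H j) (H i)) (hco : Coindep H) :
    rprod (List.ofFn H) = ⨅ i, H i :=
  le_antisymm (le_iInf fun i => rprod_ofFn_le H hcomm i) (iInf_le_rprod_ofFn H hcomm hco)

end SFAux
namespace SFAux

variable {R : Type u} [Ring R]

lemma hasSF_top : HasSerialFact (⊤ : Submodule Rᵐᵒᵖ R) := by
  refine ⟨0, fun i => i.elim0, fun i => i.elim0, fun i => i.elim0, fun i => i.elim0,
    fun i => i.elim0, ?_⟩
  rw [List.ofFn_zero, rprod_nil]

lemma hasSF_uniserial {B : Submodule Rᵐᵒᵖ R} (hB : B ≠ ⊤)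
    (hu : IsUniserialMod Rᵐᵒᵖ (R ⧸ B)) : HasSerialFact B := by
  refine ⟨1, fun _ => B, fun _ => hB, fun _ _ => rfl, ?_, fun _ => hu, ?_⟩
  · intro i
    have : (⨅ j, ⨅ (_ : j ≠ i), B) = (⊤ : Submodule Rᵐᵒᵖ R) :=
      le_antisymm le_top (le_iInf fun j => le_iInf fun hj => absurd (Subsingleton.elim j i) hj)
    rw [this, sup_top_eq]
  · rw [List.ofFn_succ, List.ofFn_zero, rprod_singleton]

lemma prod_sup_eq {n : ℕ} {F : Fin n → Submodule Rᵐᵒᵖ R} {B : Submodule Rᵐᵒᵖ R}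
    (hB : IsTwoSidedRid B)
    (hcomm : ∀ i j, rmul (F i) (F j) = rmul (F j) (F i)) (hco : Coindep F) :
    ∀ t : List (Fin n), t.Nodup →
      rprod (t.map (fun i => B ⊔ F i)) = B ⊔ rprod (t.map F) := by
  intro t
  induction t with
  | nil =>
    intro _
    rw [List.map_nil, List.map_nil, rprod_nil, sup_top_eq]
  | cons a t' ih =>
    intro hnd
    have ha : a ∉ t' := (List.nodup_cons.1 hnd).1
    have hnd' : t'.Nodup := (List.nodup_cons.1 hnd).2
    cases t' with
    | nil =>
      rw [List.map_singleton, List.map_singleton, rprod_singleton, rprod_singleton]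
    | cons b t'' =>
      rw [List.map_cons, rprod_cons, ih hnd']
      conv_rhs => rw [List.map_cons, rprod_cons]
      refine two_factor hB ?_ ?_
      · refine eq_top_iff.2 ?_
        rw [← hco a]
        refine sup_le_sup_left ?_ _
        refine le_trans ?_ (iInf_le_rprod F hcomm hco (b :: t'') hnd')
        refine le_iInf₂ fun k hk => ?_
        have hka : k ≠ a := by rintro rfl; exact ha hk
        exact le_trans (iInf_le _ k) (iInf_le _ hka)
      · refine rmul_rprod_comm _ (by simp) ?_
        intro C hC
        obtain ⟨i, _, rfl⟩ := List.mem_map.1 hC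
        exact hcomm a i

lemma hasSF_of_twosided {n : ℕ} {F : Fin n → Submodule Rᵐᵒᵖ R} {B : Submodule Rᵐᵒᵖ R}
    (hprop : ∀ i, F i ≠ ⊤)
    (hcomm : ∀ i j, rmul (F i) (F j) = rmul (F j) (F i)) (hco : Coindep F)
    (hus : ∀ i, IsUniserialMod Rᵐᵒᵖ (R ⧸ F i))
    (hAB : rprod (List.ofFn F) ≤ B) (hB : IsTwoSidedRid B) : HasSerialFact B := by
  classical
  set l := (List.finRange n).filter (fun i => decide (B ⊔ F i ≠ ⊤)) with hl
  have hmeml : ∀ i, i ∈ l ↔ B ⊔ F i ≠ ⊤ := by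
    intro i
    rw [hl, List.mem_filter]
    simp [List.mem_finRange]
  have hnd : l.Nodup := (List.nodup_finRange n).filter _
  have hgetinj : Function.Injective l.get := List.nodup_iff_injective_get.1 hnd
  set G : Fin l.length → Submodule Rᵐᵒᵖ R := fun k => B ⊔ F (l.get k) with hG
  have hofFn : List.ofFn G = l.map (fun i => B ⊔ F i) := by
    have h : List.map (fun i => B ⊔ F i) (List.ofFn l.get) = List.ofFn ((fun i => B ⊔ F i) ∘ l.get) := List.map_ofFn
    rw [List.ofFn_get] at h
    exact h.symm
  refine ⟨l.length, G, ?_, ?_, ?_, ?_, ?_⟩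
  · intro k
    exact (hmeml (l.get k)).1 (List.get_mem l k)
  · intro k k'
    by_cases hkk : k = k'
    · subst hkk; rfl
    · have hne : l.get k ≠ l.get k' := fun h => hkk (hgetinj h)
      rw [hG]
      have h1 := two_factor hB (coindep_pair hco hne.symm) (hcomm (l.get k) (l.get k'))
      have h2 := two_factor hB (coindep_pair hco hne) (hcomm (l.get k') (l.get k))
      rw [h1, h2, hcomm]
  · intro k
    refine eq_top_iff.2 ?_
    rw [← hco (l.get k)]
    refine sup_le_sup le_sup_right ?_
    refine le_iInf fun k' => le_iInf fun hk' => ?_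
    have hne : l.get k' ≠ l.get k := fun h => hk' (hgetinj h)
    refine le_trans (le_trans (iInf_le _ (l.get k')) (iInf_le _ hne)) le_sup_right
  · intro k
    exact uniserial_quot_of_le (hus (l.get k)) le_sup_right
  · rw [hofFn, prod_sup_eq hB hcomm hco l hnd]
    refine (sup_eq_left.2 ?_).symm
    -- rprod (l.map F) ≤ B
    have h1 : rprod (l.map F) ≤ ⨅ i ∈ l, F i := by
      refine le_iInf fun i => le_iInf fun hi => ?_
      refine rprod_le_mem _ ?_ (F i) (List.mem_map.2 ⟨i, hi, rfl⟩)
      intro X hX Y hY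
      obtain ⟨a, _, rfl⟩ := List.mem_map.1 hX
      obtain ⟨b, _, rfl⟩ := List.mem_map.1 hY
      exact hcomm a b
    have h2 : (⨅ i ∈ l, F i) ≤ B := by
      have hKc : ∀ i ∈ (l.toFinset)ᶜ, B ⊔ F i = ⊤ := by
        intro i hi
        have : i ∉ l := by
          intro h
          exact (Finset.mem_compl.1 hi) (List.mem_toFinset.2 h)
        by_contra hne
        exact this ((hmeml i).2 hne)
      have hA : (⨅ i, F i) ≤ B := le_trans (iInf_le_rprod_ofFn F hcomm hco) hAB
      have := inf_compl_le hcomm hA (l.toFinset)ᶜ hKc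
      rw [compl_compl] at this
      refine le_trans ?_ this
      refine le_iInf fun i => le_iInf fun hi => ?_
      exact le_trans (iInf_le _ i) (iInf_le _ (List.mem_toFinset.1 hi))
    exact le_trans h1 h2

end SFAux
open SFAux

/-- Theorem (Tuesday)(1): if `A = A₁⋯Aₙ` is a serial factorization and `A ⊆ B`, then `B`
has a serial factorization iff `B ⊇ Aᵢ` for some `i` or `B` is a two-sided ideal. -/
theorem statement7 {R : Type u} [Ring R] [Nontrivial R] {n : ℕ}
    (A B : Submodule Rᵐᵒᵖ R) (F : Fin n → Submodule Rᵐᵒᵖ R)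
    (hsf : IsSerialFact A F) (hAB : A ≤ B) :
    HasSerialFact B ↔ (∃ i, F i ≤ B) ∨ IsTwoSidedRid B := by
  obtain ⟨hprop, hcomm, hco, hus, hAprod⟩ := hsf
  constructor
  · rintro ⟨m, G, hGprop, hGcomm, hGco, hGus, hBprod⟩
    by_cases hex : ∃ i, F i ≤ B
    · exact Or.inl hex
    right
    rcases Nat.eq_zero_or_pos n with hn0 | hn
    · -- n = 0 : A = ⊤, so B = ⊤ is two-sided
      subst hn0
      have hA : A = ⊤ := by rw [hAprod, List.ofFn_zero, rprod_nil]
      have hBtop : B = ⊤ := top_le_iff.1 (hA ▸ hAB)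
      rw [hBtop]
      intro r x _
      trivial
    obtain ⟨n', rfl⟩ : ∃ n', n = n' + 1 := ⟨n - 1, by omega⟩
    have hB_eq : B = ⨅ j, G j := by rw [hBprod]; exact rprod_ofFn_eq_iInf G hGcomm hGco
    have hBle : ∀ j, B ≤ G j := fun j => hB_eq ▸ iInf_le _ j
    have hAleB : (⨅ i, F i) ≤ B := le_trans (iInf_le_rprod_ofFn F hcomm hco) (hAprod ▸ hAB)
    set E : Fin (n' + 1) → Submodule Rᵐᵒᵖ R := fun i => ⨅ j, ⨅ (_ : j ≠ i), F j with hE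
    -- per factor of B : find a coordinate
    have hkey : ∀ j : Fin m, ∃ i₀, (E i₀ ⊔ G j = ⊤) ∧
        (F i₀ ≤ G j ∨ IsTwoSidedRid (G j)) := by
      intro j
      obtain ⟨i₀, hmax⟩ := exists_max (fun i => E i ⊔ G j)
        (fun a b => chain_of_uniserial (hGus j) le_sup_right le_sup_right)
      have htop : E i₀ ⊔ G j = ⊤ := by
        refine eq_top_iff.2 ?_
        have hsup : (⨆ i, E i) = ⊤ := sup_Ei_top (Nat.succ_pos n') F hco
        calc (⊤ : Submodule Rᵐᵒᵖ R) = (⨆ i, E i) ⊔ G j := by rw [hsup, top_sup_eq]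
          _ ≤ E i₀ ⊔ G j :=
            sup_le (iSup_le fun i => le_trans le_sup_left (hmax i)) le_sup_right
      refine ⟨i₀, htop, ?_⟩
      by_cases hcase : F i₀ ≤ G j
      · exact Or.inl hcase
      right
      obtain ⟨e, he, g, hg, heg⟩ :=
        Submodule.mem_sup.1 (htop ▸ Submodule.mem_top (x := (1:R)))
      refine lemmaM (E := E i₀) (F := F i₀) ?_ ?_
        (fun X Y hX hY => chain_of_uniserial (hus i₀) hX hY) hcase he hg heg
      · -- E i₀ · F i₀ ⊆ F i₀
        rcases Nat.eq_zero_or_pos n' with rfl | hn'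
        · exfalso
          apply hcase
          have hi₀ : i₀ = 0 := Fin.ext (by have := i₀.isLt; omega)
          have hAF : rprod (List.ofFn F) = F i₀ := by
            rw [hi₀, List.ofFn_succ, List.ofFn_zero, rprod_singleton]
          exact le_trans (le_of_eq hAF.symm) (le_trans (hAprod ▸ hAB) (hBle j))
        · intro y hy f hf
          set t := (List.finRange (n' + 1)).erase i₀ with ht
          have htnd : t.Nodup := (List.nodup_finRange _).erase _
          have htne : t ≠ [] := by
            have hlen : t.length = n' := by
              rw [ht, List.length_erase_of_mem (List.mem_finRange i₀), List.length_finRange]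
              omega
            intro h
            rw [h] at hlen
            simp at hlen
            omega
          have hEle : E i₀ ≤ rprod (t.map F) := by
            refine le_trans ?_ (iInf_le_rprod F hcomm hco t htnd)
            refine le_iInf fun k => le_iInf fun hk => ?_
            have hki : k ≠ i₀ := ((List.Nodup.mem_erase_iff (List.nodup_finRange _)).1 hk).1
            exact le_trans (iInf_le _ k) (iInf_le _ hki)
          have hcommP : rmul (F i₀) (rprod (t.map F)) = rmul (rprod (t.map F)) (F i₀) := by
            refine rmul_rprod_comm _ (by simpa using htne) ?_
            intro C hC
            obtain ⟨i, _, rfl⟩ := List.mem_map.1 hC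
            exact hcomm i₀ i
          have : y * f ∈ rmul (rprod (t.map F)) (F i₀) := mem_rmul (hEle hy) hf
          rw [← hcommP] at this
          exact rmul_le_left this
      · -- E i₀ ⊓ F i₀ ≤ G j
        refine le_trans ?_ (le_trans hAleB (hBle j))
        refine le_iInf fun k => ?_
        by_cases hk : k = i₀
        · subst hk; exact inf_le_right
        · exact le_trans inf_le_left (le_trans (iInf_le _ k) (iInf_le _ hk))
    choose idx hidx1 hidx2 using hkey
    have hinj : ∀ j l : Fin m, j ≠ l → F (idx j) ≤ G j → F (idx l) ≤ G l →
        idx j ≠ idx l := by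
      intro j l hjl hj hl heq
      rw [heq] at hj
      rcases chain_of_uniserial (hus (idx l)) hj hl with h | h
      · have htop : G j ⊔ G l = ⊤ := coindep_pair hGco (Ne.symm hjl)
        rw [sup_eq_right.2 h] at htop
        exact hGprop l htop
      · have htop : G l ⊔ G j = ⊤ := coindep_pair hGco hjl
        rw [sup_eq_right.2 h] at htop
        exact hGprop j htop
    intro r x hx
    have hmain : ∀ j, r * x ∈ G j := by
      intro j
      rcases hidx2 j with hFj | hts
      · -- F (idx j) ≤ G j
        set t := (List.finRange m).erase j with ht
        by_cases htnil : t = []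
        · -- then m = 1, B = G j, contradiction with hex
          exfalso
          have hlen : t.length = m - 1 := by
            rw [ht, List.length_erase_of_mem (List.mem_finRange j), List.length_finRange]
          rw [htnil] at hlen
          have hm : m = 1 := by have := j.isLt; simp at hlen; omega
          have hBG : B = G j := by
            rw [hB_eq]
            refine le_antisymm (iInf_le _ j) (le_iInf fun j' => ?_)
            have : j' = j := Fin.ext (by have h1 := j'.isLt; have h2 := j.isLt; omega)
            rw [this]
          exact hex ⟨idx j, hBG ▸ hFj⟩
        · obtain ⟨e, he, g, hg, heg⟩ :=
            Submodule.mem_sup.1 ((hidx1 j) ▸ Submodule.mem_top (x := (1:R)))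
          set C := rprod (t.map G) with hC
          have hBleC : B ≤ rmul C (G j) := by
            rw [hBprod, List.ofFn_eq_map]
            exact rprod_le_rmul_erase G hGcomm _ j (List.mem_finRange j)
          have hCGj : rmul C (G j) ≤ G j := by
            have hcomm' : rmul (G j) C = rmul C (G j) := by
              refine rmul_rprod_comm _ (by simpa using htnil) ?_
              intro D hD
              obtain ⟨i, _, rfl⟩ := List.mem_map.1 hD
              exact hGcomm j i
            rw [← hcomm']
            exact rmul_le_left
          have hyCG : ∀ y ∈ E (idx j), ∀ c ∈ C, y * c ∈ C := by
            intro y hy c hc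
            have hstep : ∀ l' : Fin m, l' ≠ j → y * c ∈ G l' := by
              intro l' hl'
              have hl't : l' ∈ t :=
                (List.Nodup.mem_erase_iff (List.nodup_finRange m)).2 ⟨hl', List.mem_finRange l'⟩
              have hcl' : c ∈ G l' := by
                refine rprod_le_mem _ ?_ (G l') (List.mem_map.2 ⟨l', hl't, rfl⟩) hc
                intro X hX Y hY
                obtain ⟨a, _, rfl⟩ := List.mem_map.1 hX
                obtain ⟨b, _, rfl⟩ := List.mem_map.1 hY
                exact hGcomm a b
              rcases hidx2 l' with hFl' | htsl'
              · have hne : idx l' ≠ idx j := hinj l' j hl' hFl' hFj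
                have hyF : y ∈ F (idx l') := (mem_iInf_ne.1 hy) (idx l') hne
                exact mem_right (hFl' hyF) c
              · exact htsl' y c hcl'
            have hmem : y * c ∈ ⨅ i ∈ t, G i := by
              refine mem_iInf_list.2 fun l' hl' => ?_
              exact hstep l' ((List.Nodup.mem_erase_iff (List.nodup_finRange m)).1 hl').1
            exact (iInf_le_rprod G hGcomm hGco t ((List.nodup_finRange m).erase _)) hmem
          have hyx : ∀ y ∈ E (idx j), y * x ∈ G j := by
            intro y hy
            have hxC : x ∈ rmul C (G j) := hBleC hx
            refine rmul_induction (p := fun w => y * w ∈ G j) hxC ?_ ?_ ?_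
            · show y * 0 ∈ G j
              rw [mul_zero]; exact zero_mem _
            · intro c hc gg hgg
              show y * (c * gg) ∈ G j
              rw [← mul_assoc]
              exact hCGj (mem_rmul (hyCG y hy c hc) hgg)
            · intro u v hu hv
              show y * (u + v) ∈ G j
              rw [mul_add]
              exact add_mem hu hv
          have hdec : r * x = (e * r) * x + g * (r * x) := by
            calc r * x = (e + g) * (r * x) := by rw [heg, one_mul]
              _ = (e * r) * x + g * (r * x) := by rw [add_mul, mul_assoc]
          rw [hdec]
          exact add_mem (hyx (e * r) (mem_right he r)) (mem_right hg (r * x))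
      · exact hts r x (hBle j hx)
    have : r * x ∈ ⨅ j, G j := (Submodule.mem_iInf G).2 hmain
    rwa [← hB_eq] at this
  · rintro (⟨i, hi⟩ | hts)
    · by_cases hB : B = ⊤
      · rw [hB]; exact hasSF_top
      · exact hasSF_uniserial hB (uniserial_quot_of_le (hus i) hi)
    · exact hasSF_of_twosided hprop hcomm hco hus (hAprod ▸ hAB) hts
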